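/- If T is a supertableau of shape μ (row-standard in blue, column-standard in red) whose bottom-left entry T(l,1) (with l = l(μ)) is blue with value c, then replacing T(l,1) by red (c+1) yields again a supertableau of shape μ; and if T(l,1) is red with value c ≥ 1 and the cell above (if any) has value strictly less than c, then replacing T(l,1) by blue (c−1) yields again a supertableau; moreover these two operations are mutually inverse. -/
import Mathlib


/-- A letter of the alphabet `A = {red 0, blue 0, red 1, blue 1, …}`:
the pair `(i, false)` is red `i` and `(i, true)` is blue `i`; the numerical value is `i`. -/
abbrev Letter := ℕ × Bool

/-- Rank realizing the total order `red 0 < blue 0 < red 1 < blue 1 < ⋯`. -/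
def rank (x : Letter) : ℕ := 2 * x.1 + (if x.2 then 1 else 0)

/-- A filling of the Young diagram of a composition `α` (row `i` has `α i` boxes). -/
def Filling {k : ℕ} (α : Fin k → ℕ) : Type := (i : Fin k) → Fin (α i) → Letter

/-- Rows weakly increasing, with each red value occurring at most once per row. -/
def RowStandardRed {k : ℕ} {α : Fin k → ℕ} (T : Filling α) : Prop :=
  ∀ (i : Fin k) (j j' : Fin (α i)), j < j' →
    rank (T i j) ≤ rank (T i j') ∧ (T i j = T i j' → (T i j).2 = true)

/-- Rows weakly increasing, with each blue value occurring at most once per row. -/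
def RowStandardBlue {k : ℕ} {α : Fin k → ℕ} (T : Filling α) : Prop :=
  ∀ (i : Fin k) (j j' : Fin (α i)), j < j' →
    rank (T i j) ≤ rank (T i j') ∧ (T i j = T i j' → (T i j).2 = false)

/-- Columns weakly increasing, with each red value occurring at most once per column. -/
def ColStandardRed {k : ℕ} {α : Fin k → ℕ} (T : Filling α) : Prop :=
  ∀ (i i' : Fin k), i < i' → ∀ (j : ℕ) (h : j < α i) (h' : j < α i'),
    rank (T i ⟨j, h⟩) ≤ rank (T i' ⟨j, h'⟩) ∧
      (T i ⟨j, h⟩ = T i' ⟨j, h'⟩ → (T i ⟨j, h⟩).2 = true)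


/-- A supertableau: row-standard in the blue entries and column-standard in the red. -/
def IsSuper {k : ℕ} {α : Fin k → ℕ} (T : Filling α) : Prop :=
  RowStandardBlue T ∧ ColStandardRed T

/-- Replace the bottom-left entry (last row of the first column) by the letter `x`. -/
def updateBL {d : ℕ} {μ : Fin d → ℕ} (T : Filling μ) (x : Letter) : Filling μ :=
  fun i j => if (i : ℕ) = d - 1 ∧ (j : ℕ) = 0 then x else T i j

lemma rank_inj {x y : Letter} (h : rank x = rank y) : x = y := by
  obtain ⟨a, b⟩ := x; obtain ⟨c, e⟩ := y
  cases b <;> cases e <;> simp_all [rank] <;> omega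

lemma rank_blue (c : ℕ) : rank (c, true) = 2 * c + 1 := by simp [rank]

lemma rank_red (c : ℕ) : rank (c, false) = 2 * c := by simp [rank]

lemma updateBL_super {d : ℕ} {μ : Fin d → ℕ} (hl : d - 1 < d)
    (T : Filling μ) (hT : IsSuper T) (x : Letter)
    (hrow : ∀ (j' : Fin (μ ⟨d - 1, hl⟩)), 0 < (j' : ℕ) →
      rank x ≤ rank (T ⟨d - 1, hl⟩ j') ∧ (x = T ⟨d - 1, hl⟩ j' → x.2 = false))
    (hcol : ∀ (i : Fin d), (i : ℕ) < d - 1 → ∀ (hi : 0 < μ i),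
      rank (T i ⟨0, hi⟩) ≤ rank x ∧ (T i ⟨0, hi⟩ = x → (T i ⟨0, hi⟩).2 = true)) :
    IsSuper (updateBL T x) := by
  have key : ∀ (i : Fin d) (j : Fin (μ i)), ¬((i : ℕ) = d - 1 ∧ (j : ℕ) = 0) →
      updateBL T x i j = T i j := by
    intro i j h
    simp only [updateBL, if_neg h]
  constructor
  · intro i j j' hjj'
    have hjj'n : (j : ℕ) < (j' : ℕ) := hjj'
    by_cases hij : (i : ℕ) = d - 1 ∧ (j : ℕ) = 0
    · have e1 : updateBL T x i j = x := by simp only [updateBL, if_pos hij]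
      have e2 : updateBL T x i j' = T i j' := key i j' (fun h => by omega)
      rw [e1, e2]
      have hieq : i = ⟨d - 1, hl⟩ := Fin.ext hij.1
      subst hieq
      exact hrow j' (by omega)
    · rw [key i j hij, key i j' (fun h => hij ⟨h.1, by omega⟩)]
      exact hT.1 i j j' hjj'
  · intro i i' hii' j hj hj'
    have hii'n : (i : ℕ) < (i' : ℕ) := hii'
    have hi'lt : (i' : ℕ) < d := i'.isLt
    have e1 : updateBL T x i ⟨j, hj⟩ = T i ⟨j, hj⟩ :=
      key i ⟨j, hj⟩ (fun h => by simp only at h; omega)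
    rw [e1]
    by_cases hij : (i' : ℕ) = d - 1 ∧ j = 0
    · obtain ⟨hij1, hij2⟩ := hij
      have hieq : i' = ⟨d - 1, hl⟩ := Fin.ext hij1
      subst hieq
      subst hij2
      have e2 : updateBL T x ⟨d - 1, hl⟩ ⟨0, hj'⟩ = x := by
        simp [updateBL]
      rw [e2]
      exact hcol i (by omega) hj
    · rw [key i' ⟨j, hj'⟩ (fun h => hij ⟨h.1, h.2⟩)]
      exact hT.2 i i' hii' j hj hj'

/-- If the bottom-left entry of a supertableau `T` of shape `μ` is
blue `c`, replacing it by red `c+1` again gives a supertableau; if it is red `c`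
with `c ≥ 1` and the cell above (if any) has numerical value strictly less than
`c`, replacing it by blue `c-1` again gives a supertableau; and these two
operations are mutually inverse. -/
theorem supertableau_bottom_left_ops (d : ℕ) (hd : 0 < d) (μ : Fin d → ℕ)
    (h0 : 0 < μ ⟨d - 1, by omega⟩) (T : Filling μ) (hT : IsSuper T) :
    (∀ c : ℕ, T ⟨d - 1, by omega⟩ ⟨0, h0⟩ = (c, true) →
      IsSuper (updateBL T (c + 1, false)) ∧
        updateBL (updateBL T (c + 1, false)) (c, true) = T) ∧
    (∀ c : ℕ, 1 ≤ c → T ⟨d - 1, by omega⟩ ⟨0, h0⟩ = (c, false) →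
      (∀ (hd2 : 2 ≤ d) (hcol : 0 < μ ⟨d - 2, by omega⟩),
          (T ⟨d - 2, by omega⟩ ⟨0, hcol⟩).1 < c) →
      IsSuper (updateBL T (c - 1, true)) ∧
        updateBL (updateBL T (c - 1, true)) (c, false) = T) := by
  have hl : d - 1 < d := by omega
  have h0' : 0 < μ ⟨d - 1, hl⟩ := h0
  have hinv : ∀ x c b, T ⟨d - 1, hl⟩ ⟨0, h0'⟩ = (c, b) →
      updateBL (updateBL T x) (c, b) = T := by
    intro x c b hTl
    funext i j
    simp only [updateBL]
    by_cases hij : (i : ℕ) = d - 1 ∧ (j : ℕ) = 0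
    · rw [if_pos hij]
      have hieq : i = ⟨d - 1, hl⟩ := Fin.ext hij.1
      subst hieq
      have hjeq : j = ⟨0, h0'⟩ := Fin.ext hij.2
      subst hjeq
      exact hTl.symm
    · rw [if_neg hij, if_neg hij]
  constructor
  · intro c hTl
    have hTl' : T ⟨d - 1, hl⟩ ⟨0, h0'⟩ = (c, true) := hTl
    refine ⟨updateBL_super hl T hT _ ?_ ?_, hinv _ c true hTl⟩
    · intro j' hj'
      have h1 := hT.1 ⟨d - 1, hl⟩ ⟨0, h0'⟩ j' hj'
      rw [hTl'] at h1
      have hne : T ⟨d - 1, hl⟩ j' ≠ (c, true) := fun he => by simpa [he] using h1.2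
      have h3 : rank (c, true) ≠ rank (T ⟨d - 1, hl⟩ j') :=
        fun he => hne (rank_inj he).symm
      rw [rank_blue] at h1 h3
      rw [rank_red]
      refine ⟨by omega, fun _ => rfl⟩
    · intro i hi hi0
      have h1 := hT.2 i ⟨d - 1, hl⟩ (show (i : ℕ) < d - 1 from hi) 0 hi0 h0'
      rw [hTl'] at h1
      rw [rank_blue] at h1
      refine ⟨by rw [rank_red]; omega, fun he => ?_⟩
      exfalso
      have h2 := h1.1
      rw [he, rank_red] at h2
      omega
  · intro c hc hTl _
    have hTl' : T ⟨d - 1, hl⟩ ⟨0, h0'⟩ = (c, false) := hTl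
    refine ⟨updateBL_super hl T hT _ ?_ ?_, hinv _ c false hTl⟩
    · intro j' hj'
      have h1 := hT.1 ⟨d - 1, hl⟩ ⟨0, h0'⟩ j' hj'
      rw [hTl'] at h1
      rw [rank_red] at h1
      refine ⟨by rw [rank_blue]; omega, fun he => ?_⟩
      exfalso
      have h2 := h1.1
      rw [← he, rank_blue] at h2
      omega
    · intro i hi hi0
      have h1 := hT.2 i ⟨d - 1, hl⟩ (show (i : ℕ) < d - 1 from hi) 0 hi0 h0'
      rw [hTl'] at h1
      have hne : T i ⟨0, hi0⟩ ≠ (c, false) := fun he => by simpa [he] using h1.2 he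
      have h3 : rank (T i ⟨0, hi0⟩) ≠ rank (c, false) :=
        fun he => hne (rank_inj he)
      rw [rank_red] at h1 h3
      refine ⟨by rw [rank_blue]; omega, fun he => by rw [he]⟩
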